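/- Let a₁,…,aₙ ≥ 0 and p₁,…,pₙ > 0 with Σ pᵢ = 1, and let λ = min{p₁,…,pₙ}. Then Σ pᵢ aᵢ − Π aᵢ^{pᵢ} ≥ nλ ( (1/n) Σ aᵢ − Π aᵢ^{1/n} ), refining the weighted AM–GM inequality. -/

import Mathlib

open Finset in
theorem refined_weighted_am_gm (n : ℕ) (hn : 1 ≤ n) (a p : Fin n → ℝ)
    (ha : ∀ i, 0 ≤ a i) (hp : ∀ i, 0 < p i) (hsum : ∑ i, p i = 1)
    (lam : ℝ) (hmem : ∃ i, p i = lam) (hle : ∀ i, lam ≤ p i) :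
    (n : ℝ) * lam * ((1 / (n : ℝ)) * ∑ i, a i - ∏ i, a i ^ ((1:ℝ) / (n : ℝ))) ≤
      ∑ i, p i * a i - ∏ i, a i ^ p i := by
  obtain ⟨i₀, hi₀⟩ := hmem
  have hlam : 0 < lam := hi₀ ▸ hp i₀
  have hnpos : (0:ℝ) < n := by exact_mod_cast hn
  have hn0 : (n:ℝ) ≠ 0 := hnpos.ne'
  set L : ℝ := (n:ℝ) * lam with hL
  have hLpos : 0 < L := mul_pos hnpos hlam
  have hL1 : L ≤ 1 := by
    have h1 : ∑ _i : Fin n, lam ≤ ∑ i, p i := Finset.sum_le_sum fun i _ => hle i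
    rw [hsum, Finset.sum_const] at h1
    simp only [Finset.card_univ, Fintype.card_fin, nsmul_eq_mul] at h1
    rw [hL]; linarith
  set G : ℝ := ∏ i, a i ^ ((1:ℝ) / (n:ℝ)) with hG
  have hGnn : 0 ≤ G := Finset.prod_nonneg fun i _ => Real.rpow_nonneg (ha i) _
  have hGL : G ^ L = ∏ i, a i ^ lam := by
    rw [hG, ← Real.finset_prod_rpow _ _ (fun i _ => Real.rpow_nonneg (ha i) _)]
    refine Finset.prod_congr rfl fun i _ => ?_
    rw [← Real.rpow_mul (ha i)]
    congr 1
    rw [hL]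
    field_simp
  rcases eq_or_lt_of_le hL1 with hEq | hLt
  · -- L = 1, so p i = lam for all i
    have hnl : (n:ℝ) * lam = 1 := by rw [← hL]; exact hEq
    have hpeq : ∀ i, p i = lam := by
      intro i
      by_contra h
      have hlt : lam < p i := lt_of_le_of_ne (hle i) (Ne.symm h)
      have h2 : ∑ _j : Fin n, lam < ∑ j, p j :=
        Finset.sum_lt_sum (fun j _ => hle j) ⟨i, Finset.mem_univ i, hlt⟩
      rw [hsum, Finset.sum_const] at h2
      simp only [Finset.card_univ, Fintype.card_fin, nsmul_eq_mul] at h2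
      linarith
    have hlameq : lam = 1 / (n:ℝ) := by
      field_simp
      linear_combination hnl
    have h1 : ∑ i, p i * a i = lam * ∑ i, a i := by
      rw [Finset.mul_sum]; exact Finset.sum_congr rfl fun i _ => by rw [hpeq i]
    have h2 : ∏ i, a i ^ p i = G := by
      rw [hG]; exact Finset.prod_congr rfl fun i _ => by rw [hpeq i, hlameq]
    rw [h1, h2, hEq, one_mul, ← hlameq]
  · -- L < 1
    set q : Fin n → ℝ := fun i => (p i - lam) / (1 - L) with hq
    clear_value q
    have h1L : 0 < 1 - L := by linarith
    have hqnn : ∀ i, 0 ≤ q i := fun i => by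
      simp only [hq]; exact div_nonneg (by linarith [hle i]) h1L.le
    have hqi : ∀ i, q i * (1 - L) = p i - lam := fun i => by
      simp only [hq]; exact div_mul_cancel₀ _ h1L.ne'
    have hqsum : ∑ i, q i = 1 := by
      have h2 : (∑ i, q i) * (1 - L) = 1 - L := by
        rw [Finset.sum_mul]
        rw [Finset.sum_congr rfl fun i _ => hqi i, Finset.sum_sub_distrib, hsum,
          Finset.sum_const]
        simp only [Finset.card_univ, Fintype.card_fin, nsmul_eq_mul]
        rw [hL]
      have := mul_right_cancel₀ h1L.ne' (by rw [h2, one_mul] : (∑ i, q i) * (1 - L) = 1 * (1 - L))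
      exact this
    set Q : ℝ := ∏ i, a i ^ q i with hQ
    have hQnn : 0 ≤ Q := Finset.prod_nonneg fun i _ => Real.rpow_nonneg (ha i) _
    have hQA : Q ≤ ∑ i, q i * a i :=
      Real.geom_mean_le_arith_mean_weighted _ q a (fun i _ => hqnn i) hqsum (fun i _ => ha i)
    have hQL : Q ^ (1 - L) = ∏ i, a i ^ (p i - lam) := by
      rw [hQ, ← Real.finset_prod_rpow _ _ (fun i _ => Real.rpow_nonneg (ha i) _)]
      refine Finset.prod_congr rfl fun i _ => ?_
      rw [← Real.rpow_mul (ha i), hqi i]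
    have hprod : ∏ i, a i ^ p i = G ^ L * Q ^ (1 - L) := by
      rw [hGL, hQL, ← Finset.prod_mul_distrib]
      refine Finset.prod_congr rfl fun i _ => ?_
      rw [← Real.rpow_add_of_nonneg (ha i) hlam.le (by linarith [hle i])]
      congr 1; ring
    have hLn : L * (1/(n:ℝ)) = lam := by
      rw [hL]; field_simp
    have hsum2 : ∑ i, p i * a i = L * ((1/(n:ℝ)) * ∑ i, a i) + (1 - L) * ∑ i, q i * a i := by
      calc ∑ i, p i * a i
          = ∑ i, (lam * a i + (1 - L) * (q i * a i)) := by
            refine Finset.sum_congr rfl fun i _ => ?_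
            linear_combination -(a i) * hqi i
        _ = lam * ∑ i, a i + (1 - L) * ∑ i, q i * a i := by
            rw [Finset.sum_add_distrib, ← Finset.mul_sum, ← Finset.mul_sum]
        _ = L * ((1/(n:ℝ)) * ∑ i, a i) + (1 - L) * ∑ i, q i * a i := by
            rw [← mul_assoc, hLn]
    have hamgm2 : G ^ L * Q ^ (1 - L) ≤ L * G + (1 - L) * Q :=
      Real.geom_mean_le_arith_mean2_weighted hLpos.le h1L.le hGnn hQnn (by ring)
    rw [hprod, hsum2]
    nlinarith [mul_le_mul_of_nonneg_left hQA h1L.le]
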